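/- For every n ≥ 1, ρ_n(𝒜_Ω) = ρ_n(𝒜, Ω), i.e., sup over all products of n matrices from the Ω-lift 𝒜_Ω of |||A^{(i_n)}⋯A^{(i_1)}|||^{1/n} equals sup over Ω-admissible sequences (i_1,…,i_n) of ‖A_{i_n}⋯A_{i_1}‖^{1/n} (both suprema being 0 when the relevant sets are empty). -/
import Mathlib


open Matrix Filter
open scoped Kronecker

/-- `seqProd A n = A (n-1) * ⋯ * A 1 * A 0`. -/
def seqProd {α : Type*} [Monoid α] (A : ℕ → α) (n : ℕ) : α :=
  ((List.range n).reverse.map A).prod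

/-- The matrix `Ω_i = ω_i^T δ_i`: outer product of the `i`-th column of `ω`
with the `i`-th standard basis row vector. -/
def OmegaM {N : ℕ} (ω : Matrix (Fin N) (Fin N) ℂ) (i : Fin N) :
    Matrix (Fin N) (Fin N) ℂ :=
  vecMulVec (fun j => ω j i) (fun k => if k = i then 1 else 0)

/-- Ω-admissibility of the finite sequence `i 0, …, i (n-1)`. -/
def Adm {N : ℕ} (ω : Matrix (Fin N) (Fin N) ℂ) (i : ℕ → Fin N) (n : ℕ) : Prop :=
  (∀ k, k + 1 < n → ω (i (k + 1)) (i k) = 1) ∧ ∃ j, ω j (i (n - 1)) = 1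

/-- Ω-admissible and periodically extendable. -/
def PerAdm {N : ℕ} (ω : Matrix (Fin N) (Fin N) ℂ) (i : ℕ → Fin N) (n : ℕ) : Prop :=
  Adm ω i n ∧ ω (i 0) (i (n - 1)) = 1

/-- Only the consecutive-transition condition (the set `W⁰`). -/
def AdmZero {N : ℕ} (ω : Matrix (Fin N) (Fin N) ℂ) (i : ℕ → Fin N) (n : ℕ) : Prop :=
  ∀ k, k + 1 < n → ω (i (k + 1)) (i k) = 1

/-- Extendability to an infinite admissible sequence (the set `W^∞`). -/
def AdmInf {N : ℕ} (ω : Matrix (Fin N) (Fin N) ℂ) (i : ℕ → Fin N) (n : ℕ) : Prop :=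
  ∃ j : ℕ → Fin N, (∀ k, k < n → j k = i k) ∧ ∀ k, ω (j (k + 1)) (j k) = 1

/-- The norm `|||M||| = max_i Σ_j ‖m_{ij}‖` on `N × N` block matrices with `d × d` blocks. -/
noncomputable def blockNorm {N d : ℕ} (nrm : Matrix (Fin d) (Fin d) ℂ → ℝ)
    (M : Matrix (Fin N × Fin d) (Fin N × Fin d) ℂ) : ℝ :=
  ⨆ i : Fin N, ∑ j : Fin N, nrm (Matrix.of fun a b => M (i, a) (j, b))

/-- The lifted matrix `A^{(i)} = Ω_i ⊗ A_i`. -/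
def liftA {N d : ℕ} (ω : Matrix (Fin N) (Fin N) ℂ)
    (A : Fin N → Matrix (Fin d) (Fin d) ℂ) (i : Fin N) :
    Matrix (Fin N × Fin d) (Fin N × Fin d) ℂ :=
  OmegaM ω i ⊗ₖ A i

/-- Spectral radius of a complex matrix, as a real number. -/
noncomputable def sprad {m : Type*} [Fintype m] [DecidableEq m] (M : Matrix m m ℂ) : ℝ :=
  (spectralRadius ℂ M).toReal

/-- `ρ_n(𝒜, Ω)`. -/
noncomputable def rhoMark {N d : ℕ} (nrm : Matrix (Fin d) (Fin d) ℂ → ℝ)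
    (ω : Matrix (Fin N) (Fin N) ℂ) (A : Fin N → Matrix (Fin d) (Fin d) ℂ) (n : ℕ) : ℝ :=
  sSup {x : ℝ | ∃ i : ℕ → Fin N, Adm ω i n ∧
    x = nrm (seqProd (fun k => A (i k)) n) ^ ((1 : ℝ) / n)}

/-- `ρ^{(per)}_n(𝒜, Ω)`. -/
noncomputable def rhoPerMark {N d : ℕ} (nrm : Matrix (Fin d) (Fin d) ℂ → ℝ)
    (ω : Matrix (Fin N) (Fin N) ℂ) (A : Fin N → Matrix (Fin d) (Fin d) ℂ) (n : ℕ) : ℝ :=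
  sSup {x : ℝ | ∃ i : ℕ → Fin N, PerAdm ω i n ∧
    x = nrm (seqProd (fun k => A (i k)) n) ^ ((1 : ℝ) / n)}

/-- `ρ^{(0)}_n(𝒜, Ω)`. -/
noncomputable def rhoZeroMark {N d : ℕ} (nrm : Matrix (Fin d) (Fin d) ℂ → ℝ)
    (ω : Matrix (Fin N) (Fin N) ℂ) (A : Fin N → Matrix (Fin d) (Fin d) ℂ) (n : ℕ) : ℝ :=
  sSup {x : ℝ | ∃ i : ℕ → Fin N, AdmZero ω i n ∧
    x = nrm (seqProd (fun k => A (i k)) n) ^ ((1 : ℝ) / n)}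

/-- `ρ^{(∞)}_n(𝒜, Ω)`. -/
noncomputable def rhoInfMark {N d : ℕ} (nrm : Matrix (Fin d) (Fin d) ℂ → ℝ)
    (ω : Matrix (Fin N) (Fin N) ℂ) (A : Fin N → Matrix (Fin d) (Fin d) ℂ) (n : ℕ) : ℝ :=
  sSup {x : ℝ | ∃ i : ℕ → Fin N, AdmInf ω i n ∧
    x = nrm (seqProd (fun k => A (i k)) n) ^ ((1 : ℝ) / n)}

/-- `ρ̂_n(𝒜, Ω)`. -/
noncomputable def rhoHatMark {N d : ℕ} (ω : Matrix (Fin N) (Fin N) ℂ)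
    (A : Fin N → Matrix (Fin d) (Fin d) ℂ) (n : ℕ) : ℝ :=
  sSup {x : ℝ | ∃ i : ℕ → Fin N, Adm ω i n ∧
    x = sprad (seqProd (fun k => A (i k)) n) ^ ((1 : ℝ) / n)}

/-- `ρ̂^{(per)}_n(𝒜, Ω)`. -/
noncomputable def rhoHatPerMark {N d : ℕ} (ω : Matrix (Fin N) (Fin N) ℂ)
    (A : Fin N → Matrix (Fin d) (Fin d) ℂ) (n : ℕ) : ℝ :=
  sSup {x : ℝ | ∃ i : ℕ → Fin N, PerAdm ω i n ∧
    x = sprad (seqProd (fun k => A (i k)) n) ^ ((1 : ℝ) / n)}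

lemma seqProd_one {α : Type*} [Monoid α] (f : ℕ → α) : seqProd f 1 = f 0 := by
  simp [seqProd, List.range_succ]

lemma seqProd_succ {α : Type*} [Monoid α] (f : ℕ → α) (n : ℕ) :
    seqProd f (n + 1) = f n * seqProd f n := by
  simp [seqProd, List.range_succ]

lemma seqProd_congr {α : Type*} [Monoid α] {f g : ℕ → α} {n : ℕ}
    (h : ∀ k, k < n → f k = g k) : seqProd f n = seqProd g n := by
  unfold seqProd
  congr 1
  apply List.map_congr_left
  intro a ha
  simp only [List.mem_reverse, List.mem_range] at ha
  exact h a ha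

lemma liftA_prod_apply {N d : ℕ} (ω : Matrix (Fin N) (Fin N) ℂ)
    (A : Fin N → Matrix (Fin d) (Fin d) ℂ) (i : ℕ → Fin N) :
    ∀ n, 1 ≤ n → ∀ p q : Fin N × Fin d,
      seqProd (fun k => liftA ω A (i k)) n p q =
        (∏ m ∈ Finset.range (n - 1), ω (i (m + 1)) (i m)) * ω p.1 (i (n - 1)) *
          (if q.1 = i 0 then 1 else 0) * seqProd (fun k => A (i k)) n p.2 q.2 := by
  intro n hn
  induction n, hn using Nat.le_induction with
  | base =>
    intro p q
    simp [seqProd_one, liftA, OmegaM, Matrix.kroneckerMap_apply, vecMulVec_apply]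
  | succ n hn IH =>
    intro p q
    rw [seqProd_succ, Matrix.mul_apply]
    have hB : seqProd (fun k => A (i k)) (n + 1) p.2 q.2
        = ∑ r₂, A (i n) p.2 r₂ * seqProd (fun k => A (i k)) n r₂ q.2 := by
      rw [seqProd_succ, Matrix.mul_apply]
    have hc : (∏ m ∈ Finset.range (n + 1 - 1), ω (i (m + 1)) (i m))
        = (∏ m ∈ Finset.range (n - 1), ω (i (m + 1)) (i m)) * ω (i n) (i (n - 1)) := by
      have h1 : n + 1 - 1 = (n - 1) + 1 := by omega
      have h2 : n - 1 + 1 = n := by omega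
      rw [h1, Finset.prod_range_succ, h2]
    simp only [IH]
    simp only [liftA, OmegaM, Matrix.kroneckerMap_apply, vecMulVec_apply,
      Fintype.sum_prod_type, hB, hc, Nat.add_sub_cancel]
    simp only [mul_ite, ite_mul, mul_zero, zero_mul, mul_one, one_mul]
    by_cases hq : q.1 = i 0
    · simp only [hq, if_true, Finset.sum_ite_irrel, Finset.sum_const_zero,
        Finset.sum_ite_eq', Finset.mem_univ]
      have hc2 : (∏ x ∈ Finset.range n, ω (i (x + 1)) (i x))
          = (∏ m ∈ Finset.range (n - 1), ω (i (m + 1)) (i m)) * ω (i n) (i (n - 1)) := by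
        simpa using hc
      rw [hc2, Finset.mul_sum]
      exact Finset.sum_congr rfl fun x _ => by ring
    · simp [hq]

section Aux
variable {N d : ℕ} (ω : Matrix (Fin N) (Fin N) ℂ) (A : Fin N → Matrix (Fin d) (Fin d) ℂ)
  (nrm : Matrix (Fin d) (Fin d) ℂ → ℝ)

lemma blockNorm_formula
    (hsmul : ∀ (c : ℂ) M, nrm (c • M) = ‖c‖ * nrm M)
    (i : ℕ → Fin N) (n : ℕ) (hn : 1 ≤ n) :
    blockNorm nrm (seqProd (fun k => liftA ω A (i k)) n) =
      ⨆ j : Fin N, ‖(∏ m ∈ Finset.range (n - 1), ω (i (m + 1)) (i m)) * ω j (i (n - 1))‖ *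
        nrm (seqProd (fun k => A (i k)) n) := by
  unfold blockNorm
  refine iSup_congr fun j => ?_
  have hb : ∀ k : Fin N, (Matrix.of fun a b =>
      (seqProd (fun k => liftA ω A (i k)) n) (j, a) (k, b)) =
      (((∏ m ∈ Finset.range (n - 1), ω (i (m + 1)) (i m)) * ω j (i (n - 1)) *
        (if k = i 0 then 1 else 0)) • seqProd (fun k => A (i k)) n) := by
    intro k
    ext a b
    simp only [Matrix.of_apply, Matrix.smul_apply, smul_eq_mul,
      liftA_prod_apply ω A i n hn (j, a) (k, b)]
  rw [Finset.sum_congr rfl fun k _ => by rw [hb k, hsmul]]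
  rw [Finset.sum_eq_single (i 0)]
  · rw [if_pos rfl, mul_one]
  · intro k _ hk
    rw [if_neg hk, mul_zero, norm_zero, zero_mul]
  · intro h
    exact absurd (Finset.mem_univ _) h

lemma bn_adm (hω : ∀ a b, ω a b = 0 ∨ ω a b = 1)
    (hnn : ∀ M, 0 ≤ nrm M)
    (hsmul : ∀ (c : ℂ) M, nrm (c • M) = ‖c‖ * nrm M)
    (i : ℕ → Fin N) (n : ℕ) (hn : 1 ≤ n) (h : Adm ω i n) :
    blockNorm nrm (seqProd (fun k => liftA ω A (i k)) n) =
      nrm (seqProd (fun k => A (i k)) n) := by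
  rw [blockNorm_formula ω A nrm hsmul i n hn]
  have hc : (∏ m ∈ Finset.range (n - 1), ω (i (m + 1)) (i m)) = 1 :=
    Finset.prod_eq_one fun m hm => h.1 m (by simp only [Finset.mem_range] at hm; omega)
  obtain ⟨j₀, hj₀⟩ := h.2
  haveI : Nonempty (Fin N) := ⟨j₀⟩
  apply le_antisymm
  · apply ciSup_le
    intro j
    rcases hω j (i (n - 1)) with h0 | h1
    · simp only [hc, h0, mul_zero, norm_zero, zero_mul]
      exact hnn _
    · simp [hc, h1]
  · have hle := le_ciSup (f := fun j : Fin N =>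
      ‖(∏ m ∈ Finset.range (n - 1), ω (i (m + 1)) (i m)) * ω j (i (n - 1))‖ *
        nrm (seqProd (fun k => A (i k)) n))
      (Set.Finite.bddAbove (Set.finite_range _)) j₀
    simpa [hc, hj₀] using hle

lemma bn_nadm (hN : 0 < N) (hω : ∀ a b, ω a b = 0 ∨ ω a b = 1)
    (hsmul : ∀ (c : ℂ) M, nrm (c • M) = ‖c‖ * nrm M)
    (i : ℕ → Fin N) (n : ℕ) (hn : 1 ≤ n) (h : ¬ Adm ω i n) :
    blockNorm nrm (seqProd (fun k => liftA ω A (i k)) n) = 0 := by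
  rw [blockNorm_formula ω A nrm hsmul i n hn]
  haveI : Nonempty (Fin N) := ⟨⟨0, hN⟩⟩
  have hz : ∀ j : Fin N,
      ‖(∏ m ∈ Finset.range (n - 1), ω (i (m + 1)) (i m)) * ω j (i (n - 1))‖ *
        nrm (seqProd (fun k => A (i k)) n) = 0 := by
    rw [Adm, not_and_or] at h
    rcases h with h1 | h2
    · push_neg at h1
      obtain ⟨k, hk, hkω⟩ := h1
      have hk0 : ω (i (k + 1)) (i k) = 0 := (hω _ _).resolve_right hkω
      have hc : (∏ m ∈ Finset.range (n - 1), ω (i (m + 1)) (i m)) = 0 :=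
        Finset.prod_eq_zero (Finset.mem_range.2 (by omega)) hk0
      intro j
      rw [hc, zero_mul, norm_zero, zero_mul]
    · push_neg at h2
      intro j
      have : ω j (i (n - 1)) = 0 := (hω _ _).resolve_right (h2 j)
      rw [this, mul_zero, norm_zero, zero_mul]
  simp only [hz, ciSup_const]

end Aux


theorem stmt6 {N d : ℕ} (hN : 0 < N) (ω : Matrix (Fin N) (Fin N) ℂ)
    (hω : ∀ a b, ω a b = 0 ∨ ω a b = 1) (nrm : Matrix (Fin d) (Fin d) ℂ → ℝ)
    (hnn : ∀ M, 0 ≤ nrm M) (hdef : ∀ M, nrm M = 0 ↔ M = 0)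
    (hadd : ∀ M₁ M₂, nrm (M₁ + M₂) ≤ nrm M₁ + nrm M₂)
    (hsmul : ∀ (c : ℂ) M, nrm (c • M) = ‖c‖ * nrm M)
    (hmul : ∀ M₁ M₂, nrm (M₁ * M₂) ≤ nrm M₁ * nrm M₂)
    (A : Fin N → Matrix (Fin d) (Fin d) ℂ) (n : ℕ) (hn : 1 ≤ n) :
    sSup {x : ℝ | ∃ i : ℕ → Fin N,
        x = blockNorm nrm (seqProd (fun k => liftA ω A (i k)) n) ^ ((1 : ℝ) / n)} =
      rhoMark nrm ω A n := by
  unfold rhoMark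
  have hn0 : 0 < n := hn
  have hexp : (1 : ℝ) / n ≠ 0 := one_div_ne_zero (Nat.cast_ne_zero.2 (by omega))
  set SL := {x : ℝ | ∃ i : ℕ → Fin N,
      x = blockNorm nrm (seqProd (fun k => liftA ω A (i k)) n) ^ ((1 : ℝ) / n)} with hSL
  set SR := {x : ℝ | ∃ i : ℕ → Fin N, Adm ω i n ∧
      x = nrm (seqProd (fun k => A (i k)) n) ^ ((1 : ℝ) / n)} with hSR
  -- extension machinery
  have hext : ∀ i : ℕ → Fin N, ∀ k, k < n →
      (fun m : ℕ => i ((⟨m % n, Nat.mod_lt m hn0⟩ : Fin n) : ℕ)) k = i k := by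
    intro i k hk
    simp [Nat.mod_eq_of_lt hk]
  have hLrange : SL ⊆ Set.range (fun f : Fin n → Fin N =>
      blockNorm nrm (seqProd (fun k => liftA ω A (f ⟨k % n, Nat.mod_lt k hn0⟩)) n)
        ^ ((1 : ℝ) / n)) := by
    rintro x ⟨i, rfl⟩
    refine ⟨fun m => i m, ?_⟩
    simp only []
    congr 1
    congr 1
    apply seqProd_congr
    intro k hk
    simp [Nat.mod_eq_of_lt hk]
  have hRrange : SR ⊆ Set.range (fun f : Fin n → Fin N =>
      nrm (seqProd (fun k => A (f ⟨k % n, Nat.mod_lt k hn0⟩)) n) ^ ((1 : ℝ) / n)) := by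
    rintro x ⟨i, _, rfl⟩
    refine ⟨fun m => i m, ?_⟩
    simp only []
    congr 2
    apply seqProd_congr
    intro k hk
    simp [Nat.mod_eq_of_lt hk]
  have bddL : BddAbove SL := (Set.Finite.bddAbove (Set.finite_range _)).mono hLrange
  have bddR : BddAbove SR := (Set.Finite.bddAbove (Set.finite_range _)).mono hRrange
  by_cases hA : ∃ i : ℕ → Fin N, Adm ω i n
  · obtain ⟨i₀, hi₀⟩ := hA
    have hR0 : (0 : ℝ) ≤ sSup SR := by
      have hmem : nrm (seqProd (fun k => A (i₀ k)) n) ^ ((1 : ℝ) / n) ∈ SR := ⟨i₀, hi₀, rfl⟩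
      exact le_trans (Real.rpow_nonneg (hnn _) _) (le_csSup bddR hmem)
    apply le_antisymm
    · refine csSup_le ⟨_, ⟨i₀, rfl⟩⟩ ?_
      rintro x ⟨i, rfl⟩
      by_cases hadm : Adm ω i n
      · rw [bn_adm ω A nrm hω hnn hsmul i n hn hadm]
        exact le_csSup bddR ⟨i, hadm, rfl⟩
      · rw [bn_nadm ω A nrm hN hω hsmul i n hn hadm, Real.zero_rpow hexp]
        exact hR0
    · refine csSup_le ⟨_, ⟨i₀, hi₀, rfl⟩⟩ ?_
      rintro x ⟨i, hadm, rfl⟩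
      refine le_csSup bddL ⟨i, ?_⟩
      rw [bn_adm ω A nrm hω hnn hsmul i n hn hadm]
  · have hRe : SR = ∅ := by
      ext x
      simp only [Set.mem_setOf_eq, Set.mem_empty_iff_false, iff_false]
      rintro ⟨i, hadm, _⟩
      exact hA ⟨i, hadm⟩
    have hLe : SL = {0} := by
      apply Set.eq_singleton_iff_nonempty_unique_mem.2
      constructor
      · exact ⟨_, ⟨fun _ => ⟨0, hN⟩, rfl⟩⟩
      · rintro x ⟨i, rfl⟩
        have hadm : ¬ Adm ω i n := fun h => hA ⟨i, h⟩
        rw [bn_nadm ω A nrm hN hω hsmul i n hn hadm, Real.zero_rpow hexp]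
    rw [hRe, hLe]
    simp [Real.sSup_empty]
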